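/- Let x_1 > x_l for all l ≥ 2 with x_i > 0 and ∑_{i=1}^N x_i = 1 (N ≥ 3). Consider the recursively defined protocol success probability: for N = 2 parties with components (x_1, x_2), the success probability is 2x_2; for N parties, party 2 succeeds in equalizing with probability q = x_2/x_1 yielding success contribution 2x_2·(first-round factor), and otherwise the protocol recurses on the (N-1)-party state with components z_i = x_i(x_1-x_2)/(x_1(1-q)). Then the total success probability equals 2η(x) = 2(x_1 - (1/x_1)^{N-2}∏_{i=2}^N(x_1 - x_i)). -/

import Mathlib

/-- The success probability of the recursive "equal or vanish" combing protocol: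
for two parties it is `2 x₂`; for `N` parties, party 2 equalizes with probability
`q = x₂/x₁` (total success contribution `2 x₂`), and otherwise the protocol recurses
on the `(N-1)`-party state with components `zᵢ = xᵢ(x₁-x₂)/(x₁(1-q))` (reindexed so
that the old party `j+1` becomes party `j`). -/
noncomputable def combProb : ℕ → (ℕ → ℝ) → ℝ
  | 0, _ => 0
  | 1, _ => 0
  | 2, x => 2 * x 2
  | N + 3, x =>
      2 * x 2 + (1 - x 2 / x 1) *
        combProb (N + 2) (fun j =>
          (if j = 1 then x 1 else x (j + 1)) * (x 1 - x 2) / (x 1 * (1 - x 2 / x 1)))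

lemma comb_aux (N : ℕ) : 2 ≤ N → ∀ x : ℕ → ℝ, 0 < x 1 →
    (∀ l, 2 ≤ l → l ≤ N → x l < x 1) →
    combProb N x =
      2 * (x 1 - (1 / x 1) ^ (N - 2) * ∏ i ∈ Finset.Icc 2 N, (x 1 - x i)) := by
  induction N using Nat.strong_induction_on with
  | _ N ih =>
    match N with
    | 0 => intro h; omega
    | 1 => intro h; omega
    | 2 =>
      intro _ x h1 hmax
      simp [combProb, Finset.Icc_self]
    | M + 3 =>
      intro _ x h1 hmax
      have hx1 : x 1 ≠ 0 := ne_of_gt h1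
      have hd : x 1 - x 2 ≠ 0 := sub_ne_zero.mpr (hmax 2 le_rfl (by omega)).ne'
      have hz : (fun j => (if j = 1 then x 1 else x (j + 1)) * (x 1 - x 2) /
          (x 1 * (1 - x 2 / x 1))) = fun j => if j = 1 then x 1 else x (j + 1) := by
        funext j
        have h : x 1 * (1 - x 2 / x 1) = x 1 - x 2 := by field_simp
        rw [h, mul_div_assoc, div_self hd, mul_one]
      have hrec : combProb (M + 3) x = 2 * x 2 + (1 - x 2 / x 1) *
          combProb (M + 2) (fun j => if j = 1 then x 1 else x (j + 1)) := by
        rw [combProb, hz]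
      have hIH := ih (M + 2) (by omega) (by omega)
        (fun j => if j = 1 then x 1 else x (j + 1)) (by simpa using h1)
        (fun l hl hl' => by
          simp only [show l ≠ 1 by omega, if_false, if_pos rfl]
          exact hmax (l + 1) (by omega) (by omega))
      norm_num at hIH
      have hprod : (∏ i ∈ Finset.Icc 2 (M + 2),
          (x 1 - if i = 1 then x 1 else x (i + 1))) =
          ∏ i ∈ Finset.Icc 3 (M + 3), (x 1 - x i) := by
        rw [show Finset.Icc 3 (M + 3) =
            Finset.map (addRightEmbedding 1) (Finset.Icc 2 (M + 2)) by
          rw [Finset.map_add_right_Icc]]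
        rw [Finset.prod_map]
        refine Finset.prod_congr rfl fun i hi => ?_
        have : i ≠ 1 := by simp [Finset.mem_Icc] at hi; omega
        simp [this, addRightEmbedding]
      rw [hprod] at hIH
      have hsplit : (∏ i ∈ Finset.Icc 2 (M + 3), (x 1 - x i)) =
          (x 1 - x 2) * ∏ i ∈ Finset.Icc 3 (M + 3), (x 1 - x i) := by
        rw [show Finset.Icc 2 (M + 3) = insert 2 (Finset.Icc 3 (M + 3)) by
          ext j; simp [Finset.mem_Icc]; omega]
        rw [Finset.prod_insert (by simp [Finset.mem_Icc])]
      rw [hrec, hIH, hsplit]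
      have h2 : M + 3 - 2 = M + 1 := by omega
      have h3 : M + 2 - 2 = M := by omega
      rw [h2]
      rw [one_div_pow]
      field_simp
      ring

/-- the "equal or vanish" protocol succeeds with total probability
`2η(x) = 2(x₁ - (1/x₁)^(N-2) ∏_{i=2}^N (x₁ - xᵢ))`. -/
theorem stmt18 (N : ℕ) (hN : 3 ≤ N) (x : ℕ → ℝ)
    (hpos : ∀ i, 1 ≤ i → i ≤ N → 0 < x i)
    (hmax : ∀ l, 2 ≤ l → l ≤ N → x l < x 1)
    (hsum : ∑ i ∈ Finset.Icc 1 N, x i = 1) :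
    combProb N x =
      2 * (x 1 - (1 / x 1) ^ (N - 2) * ∏ i ∈ Finset.Icc 2 N, (x 1 - x i)) := by
  exact comb_aux N (by omega) x (hpos 1 le_rfl (by omega)) hmax
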